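/- arXiv:1405.7573 — 2 statements merged into one kernel-verified Lean document; each statement's English description precedes it below -/
import Mathlib

section
/- Let k be a positive integer and let G be a finite connected simple graph that is regular of degree k + 1 (that is, δ(G) = Δ(G) = k + 1). Then F_k(G) = 2. -/
/-- One step of the `k`-forcing color change process: a colored vertex (in `S`)
with at most `k` non-colored neighbors causes all of its neighbors to become colored. -/
def kStep {V : Type*} [Fintype V] [DecidableEq V] (G : SimpleGraph V) [DecidableRel G.Adj]
    (k : ℕ) (S : Finset V) : Finset V :=
  S ∪ Finset.univ.filter (fun v => ∃ u ∈ S, G.Adj u v ∧ (G.neighborFinset u \ S).card ≤ k)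

/-- `S` is a `k`-forcing set if iterating the color change rule starting from `S`
eventually colors all vertices of `G`. -/
def IsKForcingSet {V : Type*} [Fintype V] [DecidableEq V] (G : SimpleGraph V)
    [DecidableRel G.Adj] (k : ℕ) (S : Finset V) : Prop :=
  ∃ n : ℕ, (kStep G k)^[n] S = Finset.univ

/-- The `k`-forcing number `F_k(G)`: the minimum cardinality of a `k`-forcing set. -/
noncomputable def kForcingNumber {V : Type*} [Fintype V] [DecidableEq V] (G : SimpleGraph V)
    [DecidableRel G.Adj] (k : ℕ) : ℕ :=
  sInf {m | ∃ S : Finset V, S.card = m ∧ IsKForcingSet G k S}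

section Aux

variable {V : Type*} [Fintype V] [DecidableEq V] (G : SimpleGraph V) [DecidableRel G.Adj]

lemma subset_kStep (k : ℕ) (S : Finset V) : S ⊆ kStep G k S := Finset.subset_union_left

lemma kStep_iter_mono (k : ℕ) (S : Finset V) {m n : ℕ} (h : m ≤ n) :
    (kStep G k)^[m] S ⊆ (kStep G k)^[n] S := by
  induction n with
  | zero => simpa [Nat.le_zero.mp h]
  | succ n ih =>
    rcases Nat.lt_or_ge m (n+1) with h' | h'
    · calc (kStep G k)^[m] S ⊆ (kStep G k)^[n] S := ih (Nat.lt_succ_iff.mp h')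
        _ ⊆ (kStep G k)^[n+1] S := by
          rw [Function.iterate_succ_apply']; exact subset_kStep G k _
    · have : m = n + 1 := le_antisymm h h'
      subst this; rfl

lemma spread {k : ℕ} (hreg : G.IsRegularOfDegree (k + 1)) {S : Finset V} {x y w : V}
    (hx : x ∈ S) (hy : y ∈ S) (hxy : G.Adj x y) (hxw : G.Adj x w) :
    w ∈ kStep G k S := by
  apply Finset.mem_union_right
  simp only [Finset.mem_filter, Finset.mem_univ, true_and]
  refine ⟨x, hx, hxw, ?_⟩
  have h1 : G.neighborFinset x \ S ⊆ G.neighborFinset x \ {y} := by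
    apply Finset.sdiff_subset_sdiff (le_refl _)
    simpa using hy
  calc (G.neighborFinset x \ S).card ≤ (G.neighborFinset x \ {y}).card := Finset.card_le_card h1
    _ = (G.neighborFinset x).card - 1 := by
        rw [Finset.sdiff_singleton_eq_erase, Finset.card_erase_of_mem (by simpa using hxy)]
    _ ≤ k := by have := hreg x; rw [← G.card_neighborFinset_eq_degree] at this; omega

lemma color_of_walk {k : ℕ} (hreg : G.IsRegularOfDegree (k + 1)) {u v : V} (huv : G.Adj u v) :
    ∀ n (w : V) (p : G.Walk w u), p.length ≤ n → w ∈ (kStep G k)^[n] ({u, v} : Finset V) := by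
  intro n
  induction n with
  | zero =>
    intro w p hp
    cases p with
    | nil => simp
    | cons h q => simp at hp
  | succ n ih =>
    intro w p hp
    cases p with
    | nil =>
      exact kStep_iter_mono G k _ (Nat.zero_le (n+1)) (by simp)
    | cons h q =>
      rename_i b
      have hq : q.length ≤ n := by simpa using hp
      have hb : b ∈ (kStep G k)^[n] ({u, v} : Finset V) := ih b q hq
      rw [Function.iterate_succ_apply']
      cases q with
      | nil =>
        have hv : v ∈ (kStep G k)^[n] ({u, v} : Finset V) :=
          kStep_iter_mono G k _ (Nat.zero_le n) (by simp)
        exact spread G hreg hb hv huv h.symm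
      | cons h' q' =>
        rename_i c
        have hc : c ∈ (kStep G k)^[n] ({u, v} : Finset V) :=
          ih c q' (by simp at hq; omega)
        exact spread G hreg hb hc h' h.symm

end Aux

/-- If `G` is a connected graph that is regular of degree `k + 1`, then `F_k(G) = 2`. -/
theorem kForcingNumber_eq_two_of_regular {V : Type*} [Fintype V] [DecidableEq V]
    (G : SimpleGraph V) [DecidableRel G.Adj] (k : ℕ) (hk : 1 ≤ k)
    (hconn : G.Connected) (hreg : G.IsRegularOfDegree (k + 1)) :
    kForcingNumber G k = 2 := by
  have hne : Nonempty V := hconn.nonempty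
  obtain ⟨u⟩ := hne
  have hnb : (G.neighborFinset u).Nonempty := by
    rw [← Finset.card_pos, G.card_neighborFinset_eq_degree, hreg u]; omega
  obtain ⟨v, hv⟩ := hnb
  have huv : G.Adj u v := by simpa using hv
  -- upper bound: {u, v} is a k-forcing set
  have hforce : ∀ w : V, ∃ n, w ∈ (kStep G k)^[n] ({u, v} : Finset V) := by
    intro w
    obtain ⟨p⟩ := hconn w u
    exact ⟨p.length, color_of_walk G hreg huv p.length w p le_rfl⟩
  choose f hf using hforce
  have h2 : 2 ∈ {m | ∃ S : Finset V, S.card = m ∧ IsKForcingSet G k S} := by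
    refine ⟨{u, v}, Finset.card_pair huv.ne, Finset.univ.sup f, ?_⟩
    apply Finset.eq_univ_iff_forall.mpr
    intro w
    exact kStep_iter_mono G k _ (Finset.le_sup (Finset.mem_univ w)) (hf w)
  -- lower bound
  have hlow : ∀ m ∈ {m | ∃ S : Finset V, S.card = m ∧ IsKForcingSet G k S}, 2 ≤ m := by
    rintro m ⟨S, hcard, n, hn⟩
    by_contra hm
    interval_cases m
    · rw [Finset.card_eq_zero] at hcard
      subst hcard
      have : (kStep G k)^[n] (∅ : Finset V) = ∅ := by
        apply Function.iterate_fixed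
        simp [kStep]
      rw [this] at hn
      exact absurd (hn ▸ Finset.mem_univ u) (Finset.notMem_empty u)
    · obtain ⟨a, rfl⟩ := Finset.card_eq_one.mp hcard
      have hfix : kStep G k {a} = {a} := by
        apply Finset.union_eq_left.mpr
        intro x hx
        simp only [Finset.mem_filter, Finset.mem_singleton] at hx
        obtain ⟨-, b, rfl, -, hle⟩ := hx
        have ha : (G.neighborFinset b \ {b}) = G.neighborFinset b := by
          rw [Finset.sdiff_singleton_eq_erase, Finset.erase_eq_of_notMem (by simp)]
        rw [ha, G.card_neighborFinset_eq_degree, hreg b] at hle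
        omega
      rw [Function.iterate_fixed hfix n] at hn
      have hanb : (G.neighborFinset a).Nonempty := by
        rw [← Finset.card_pos, G.card_neighborFinset_eq_degree, hreg a]; omega
      obtain ⟨b, hb⟩ := hanb
      have hab : G.Adj a b := by simpa using hb
      have : b ∈ ({a} : Finset V) := hn ▸ Finset.mem_univ b
      rw [Finset.mem_singleton] at this
      exact G.irrefl (this ▸ hab)
  refine le_antisymm (Nat.sInf_le h2) (hlow _ (Nat.sInf_mem ⟨2, h2⟩))
end

section
/- Let k be a positive integer and let G be a finite k-connected simple graph with n(G) > k vertices and maximum degree Δ(G) ≥ 2. Then F_k(G) ≤ ((Δ(G) − 2)·n(G) + 2) / (Δ(G) + k − 2). -/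
/-- `G` is `k`-connected: it has more than `k` vertices and remains connected after
deleting any set of fewer than `k` vertices. -/
def IsKConnected {V : Type*} [Fintype V] (G : SimpleGraph V) (k : ℕ) : Prop :=
  k < Fintype.card V ∧
    ∀ A : Finset V, A.card < k → (G.induce ((↑A : Set V)ᶜ)).Connected

section Helpers

set_option linter.unusedSectionVars false

variable {V : Type*} [Fintype V] [DecidableEq V] (G : SimpleGraph V) [DecidableRel G.Adj] (k : ℕ)

lemma kStep_subset (S : Finset V) : S ⊆ kStep G k S := Finset.subset_union_left

lemma kStep_mono {S T : Finset V} (h : S ⊆ T) : kStep G k S ⊆ kStep G k T := by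
  intro x hx
  simp only [kStep, Finset.mem_union, Finset.mem_filter, Finset.mem_univ, true_and] at hx ⊢
  rcases hx with hx | ⟨u, hu, hadj, hcard⟩
  · exact Or.inl (h hx)
  · exact Or.inr ⟨u, h hu, hadj, le_trans (Finset.card_le_card
      (Finset.sdiff_subset_sdiff (le_refl _) h)) hcard⟩

lemma iterate_univ_mono {S T : Finset V} (h : S ⊆ T) {m : ℕ}
    (hm : (kStep G k)^[m] S = Finset.univ) : (kStep G k)^[m] T = Finset.univ := by
  have key : ∀ n, (kStep G k)^[n] S ⊆ (kStep G k)^[n] T := by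
    intro n
    induction n with
    | zero => exact h
    | succ n ih => rw [Function.iterate_succ_apply', Function.iterate_succ_apply']
                   exact kStep_mono G k ih
  exact Finset.univ_subset_iff.mp (hm ▸ key m)

lemma exists_boundary_edge {B : Finset V} {x y : V} (p : G.Walk x y) (hx : x ∈ B)
    (hy : y ∉ B) : ∃ u ∈ B, ∃ v, v ∉ B ∧ G.Adj u v := by
  induction p with
  | nil => exact absurd hx hy
  | @cons a b c h q ih =>
    by_cases hb : b ∈ B
    · exact ih hb hy
    · exact ⟨a, hx, b, hb, h⟩

lemma aux_arith1 (a k c : ℕ) (h : a + 2 = k + c) (hk : 1 ≤ k) :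
    (1 + c) * (a + k) ≤ a * (a + 3) + 2 := by
  rcases Nat.lt_or_ge a c with hc | hc
  · have hc1 : c = a + 1 := by omega
    have hk1 : k = 1 := by omega
    subst hc1 hk1; ring_nf; omega
  · nlinarith

lemma aux_arith2 (a k t : ℕ) (hk : 1 ≤ k) (ht : t ≤ a + 1) :
    (t - min t k) * (a + k) ≤ a * t := by
  rcases le_or_gt t k with h | h
  · simp [min_eq_left h, Nat.sub_eq_zero_of_le (le_refl t)]
  · obtain ⟨b, hb⟩ : ∃ b, t = k + b := ⟨t - k, by omega⟩
    subst hb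
    rw [min_eq_right (by omega), Nat.add_sub_cancel_left]
    have hba : b ≤ a := by omega
    nlinarith

set_option maxHeartbeats 1000000 in
lemma key_lemma (hk : 1 ≤ k) (hΔ : 2 ≤ G.maxDegree) (hconn : G.Connected) :
    ∀ c : ℕ, ∀ B : Finset V, Bᶜ.card ≤ c → B.Nonempty →
      (∀ u ∈ B, ∃ w ∈ B, G.Adj u w) →
      ∃ T : Finset V, Disjoint T B ∧
        T.card * (G.maxDegree + k - 2) ≤ (G.maxDegree - 2) * Bᶜ.card ∧
        ∃ m, (kStep G k)^[m] (B ∪ T) = Finset.univ := by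
  intro c
  induction c with
  | zero =>
    intro B hBc _ _
    have hB : B = Finset.univ := (Finset.compl_eq_empty_iff B).mp
      (Finset.card_eq_zero.mp (Nat.le_zero.mp hBc))
    exact ⟨∅, Finset.disjoint_empty_left B, by simp, 0, by simp [hB]⟩
  | succ c ih =>
    intro B hBc hBne hBnbr
    by_cases hBu : B = Finset.univ
    · exact ⟨∅, Finset.disjoint_empty_left B, by simp, 0, by simp [hBu]⟩
    · -- find a boundary edge
      obtain ⟨b, hb⟩ := hBne
      obtain ⟨y, hy⟩ : ∃ y, y ∉ B := by
        by_contra h; push_neg at h; exact hBu (Finset.eq_univ_iff_forall.mpr h)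
      obtain ⟨p⟩ := hconn.preconnected b y
      obtain ⟨u, hu, v, hv, hadj⟩ := exists_boundary_edge G p hb hy
      set U : Finset V := G.neighborFinset u \ B with hU
      have hvU : v ∈ U := by
        simp [hU, SimpleGraph.mem_neighborFinset, hadj, hv]
      set t : ℕ := U.card with ht
      have ht1 : 1 ≤ t := Finset.card_pos.mpr ⟨v, hvU⟩
      -- t ≤ Δ - 1
      obtain ⟨w, hwB, hwadj⟩ := hBnbr u hu
      have htΔ : t < G.maxDegree := by
        have hUss : U ⊂ G.neighborFinset u := by
          refine Finset.ssubset_iff_of_subset Finset.sdiff_subset |>.mpr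
            ⟨w, ?_, ?_⟩
          · simp [SimpleGraph.mem_neighborFinset, hwadj]
          · simp [hU, hwB]
        calc t < (G.neighborFinset u).card := Finset.card_lt_card hUss
          _ = G.degree u := (G.card_neighborFinset_eq_degree u)
          _ ≤ G.maxDegree := G.degree_le_maxDegree u
      obtain ⟨T₀, hT₀U, hT₀card⟩ := Finset.exists_subset_card_eq
        (show t - min t k ≤ U.card by omega)
      set B' : Finset V := B ∪ G.neighborFinset u with hB'
      have hB'eq : B' = B ∪ U := (Finset.union_sdiff_self_eq_union).symm
      have hB'card : B'.card = B.card + t := by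
        rw [hB'eq, Finset.card_union_of_disjoint Finset.disjoint_sdiff]
      have hstep : B' ⊆ kStep G k (B ∪ T₀) := by
        intro x hx
        rw [hB'] at hx
        rcases Finset.mem_union.mp hx with hx | hx
        · exact kStep_subset G k _ (Finset.mem_union_left _ hx)
        · apply Finset.mem_union_right
          simp only [Finset.mem_filter, Finset.mem_univ, true_and]
          refine ⟨u, Finset.mem_union_left _ hu, (SimpleGraph.mem_neighborFinset G u x).mp hx, ?_⟩
          have hset : G.neighborFinset u \ (B ∪ T₀) = U \ T₀ := by
            ext z; simp only [Finset.mem_sdiff, Finset.mem_union, hU]; tauto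
          rw [hset, Finset.card_sdiff_of_subset hT₀U, hT₀card]
          omega
      -- invariant for B'
      have hB'ne : B'.Nonempty := ⟨b, Finset.mem_union_left _ hb⟩
      have hB'nbr : ∀ x ∈ B', ∃ w ∈ B', G.Adj x w := by
        intro x hx
        rcases Finset.mem_union.mp hx with hx | hx
        · obtain ⟨w', hw', hadj'⟩ := hBnbr x hx
          exact ⟨w', Finset.mem_union_left _ hw', hadj'⟩
        · exact ⟨u, Finset.mem_union_left _ hu,
            ((SimpleGraph.mem_neighborFinset G u x).mp hx).symm⟩
      have hcards : B.card ≤ Fintype.card V ∧ B'.card ≤ Fintype.card V := by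
        exact ⟨Finset.card_le_univ B, Finset.card_le_univ B'⟩
      have hBcompl : Bᶜ.card = Fintype.card V - B.card := Finset.card_compl B
      have hB'compl : B'ᶜ.card = Fintype.card V - B'.card := Finset.card_compl B'
      obtain ⟨T', hT'disj, hT'budget, m, hm⟩ := ih B' (by omega) hB'ne hB'nbr
      refine ⟨T₀ ∪ T', ?_, ?_, ?_⟩
      · refine Finset.disjoint_union_left.mpr ⟨?_, ?_⟩
        · exact Finset.disjoint_of_subset_left hT₀U (Finset.disjoint_sdiff.symm)
        · exact Finset.disjoint_of_subset_right (Finset.subset_union_left) hT'disj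
      · -- budget
        obtain ⟨a, ha⟩ : ∃ a, G.maxDegree = a + 2 := ⟨G.maxDegree - 2, by omega⟩
        have hD : G.maxDegree + k - 2 = a + k := by omega
        have hcc : Bᶜ.card = B'ᶜ.card + t := by omega
        calc (T₀ ∪ T').card * (G.maxDegree + k - 2)
            ≤ (T₀.card + T'.card) * (G.maxDegree + k - 2) :=
              Nat.mul_le_mul_right _ (Finset.card_union_le _ _)
          _ = T₀.card * (G.maxDegree + k - 2) + T'.card * (G.maxDegree + k - 2) := by
              rw [Nat.add_mul]
          _ ≤ (t - min t k) * (a + k) + (G.maxDegree - 2) * B'ᶜ.card := by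
              rw [hT₀card, hD, ← hD]; exact Nat.add_le_add_left hT'budget _
          _ ≤ a * t + a * B'ᶜ.card := by
              have h1 : (t - min t k) * (a + k) ≤ a * t :=
                aux_arith2 a k t hk (by omega)
              have h2 : (G.maxDegree - 2) * B'ᶜ.card = a * B'ᶜ.card := by
                rw [show G.maxDegree - 2 = a by omega]
              omega
          _ = (G.maxDegree - 2) * Bᶜ.card := by
              rw [hcc, show G.maxDegree - 2 = a by omega, Nat.mul_add]; omega
      · -- forcing
        refine ⟨m + 1, ?_⟩
        rw [Function.iterate_succ_apply]
        apply iterate_univ_mono G k _ hm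
        refine Finset.union_subset ?_ ?_
        · exact (hstep.trans (kStep_mono G k (by
            rw [← Finset.union_assoc]; exact Finset.subset_union_left)))
        · intro z hz
          exact kStep_subset G k _ (Finset.mem_union_right _ (Finset.mem_union_right _ hz))

lemma connected_of_kconn (hk : 1 ≤ k) (h : IsKConnected G k) : G.Connected := by
  have h0 := h.2 ∅ (by simp; omega)
  rw [Finset.coe_empty, Set.compl_empty] at h0
  exact (SimpleGraph.induceUnivIso G).connected_iff.mp h0

lemma k_le_maxDegree (hk : 1 ≤ k) (h : IsKConnected G k) (hn : k < Fintype.card V) :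
    k ≤ G.maxDegree := by
  have : Nonempty V := Fintype.card_pos_iff.mp (by omega)
  by_contra hlt
  push_neg at hlt
  obtain ⟨v, hv⟩ := G.exists_maximal_degree_vertex
  set A : Finset V := G.neighborFinset v with hA
  have hAcard : A.card = G.maxDegree := by rw [hA, G.card_neighborFinset_eq_degree, hv]
  have hconn := h.2 A (by omega)
  -- v is in the complement
  have hvmem : v ∈ ((↑A : Set V)ᶜ) := by
    simp [hA, SimpleGraph.mem_neighborFinset]
  -- there is another vertex in the complement
  have hc2 : 1 < (Aᶜ : Finset V).card := by
    have := Finset.card_compl A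
    omega
  obtain ⟨w, hw, hwv⟩ := Finset.exists_mem_ne hc2 v
  have hwmem : w ∈ ((↑A : Set V)ᶜ) := by
    simpa using hw
  obtain ⟨p⟩ := hconn.preconnected ⟨v, hvmem⟩ ⟨w, hwmem⟩
  cases p with
  | nil => exact hwv rfl
  | cons hadj q =>
    rename_i b
    have : (b : V) ∈ (↑A : Set V) := by
      have : G.Adj v (b : V) := hadj
      simpa [hA, SimpleGraph.mem_neighborFinset] using this
    exact b.2 this

end Helpers

set_option maxHeartbeats 1000000 in
/-- If `G` is `k`-connected with `n(G) > k` vertices and `Δ(G) ≥ 2`, then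
`F_k(G) ≤ ((Δ-2)n + 2) / (Δ+k-2)`. -/
theorem kForcingNumber_le_of_isKConnected {V : Type*} [Fintype V] [DecidableEq V]
    (G : SimpleGraph V) [DecidableRel G.Adj] (k : ℕ) (hk : 1 ≤ k)
    (hkconn : IsKConnected G k) (hn : k < Fintype.card V) (hΔ : 2 ≤ G.maxDegree) :
    (kForcingNumber G k : ℝ) ≤
      (((G.maxDegree : ℝ) - 2) * (Fintype.card V) + 2) / ((G.maxDegree : ℝ) + k - 2) := by
  have hne : Nonempty V := Fintype.card_pos_iff.mp (by omega)
  have hconn := connected_of_kconn G k hk hkconn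
  have hkΔ := k_le_maxDegree G k hk hkconn hn
  set Δ := G.maxDegree with hΔdef
  obtain ⟨v, hv⟩ := G.exists_maximal_degree_vertex
  set N : Finset V := G.neighborFinset v with hN
  have hNcard : N.card = Δ := by rw [hN, G.card_neighborFinset_eq_degree, ← hv]
  obtain ⟨T₀, hT₀N, hT₀card⟩ := Finset.exists_subset_card_eq
    (show Δ - k ≤ N.card by omega)
  set B₀ : Finset V := insert v N with hB₀
  have hvN : v ∉ N := by simp [hN]
  have hB₀card : B₀.card = Δ + 1 := by
    rw [hB₀, Finset.card_insert_of_notMem hvN, hNcard]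
  have hB₀ne : B₀.Nonempty := ⟨v, Finset.mem_insert_self _ _⟩
  have hB₀nbr : ∀ x ∈ B₀, ∃ w ∈ B₀, G.Adj x w := by
    intro x hx
    rcases Finset.mem_insert.mp hx with h1 | hx
    · have hNne : N.Nonempty := Finset.card_pos.mp (by omega)
      obtain ⟨w, hw⟩ := hNne
      refine ⟨w, Finset.mem_insert_of_mem hw, ?_⟩
      rw [h1]
      exact (SimpleGraph.mem_neighborFinset G v w).mp hw
    · exact ⟨v, Finset.mem_insert_self _ _,
        ((SimpleGraph.mem_neighborFinset G v x).mp hx).symm⟩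
  obtain ⟨T', hT'disj, hT'budget, m, hm⟩ :=
    key_lemma G k hk hΔ hconn B₀ᶜ.card B₀ le_rfl hB₀ne hB₀nbr
  set S : Finset V := insert v T₀ ∪ T' with hS
  -- S is forcing
  have hstep : B₀ ⊆ kStep G k (insert v T₀) := by
    intro x hx
    rcases Finset.mem_insert.mp hx with rfl | hx
    · exact kStep_subset G k _ (Finset.mem_insert_self _ _)
    · apply Finset.mem_union_right
      simp only [Finset.mem_filter, Finset.mem_univ, true_and]
      refine ⟨v, Finset.mem_insert_self _ _, (SimpleGraph.mem_neighborFinset G v x).mp hx, ?_⟩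
      have hset : G.neighborFinset v \ insert v T₀ = N \ T₀ := by
        ext z; simp only [Finset.mem_sdiff, Finset.mem_insert, hN]
        constructor
        · rintro ⟨h1, h2⟩; exact ⟨h1, fun h => h2 (Or.inr h)⟩
        · rintro ⟨h1, h2⟩
          refine ⟨h1, fun h => ?_⟩
          rcases h with rfl | h
          · exact hvN h1
          · exact h2 h
      rw [hset, Finset.card_sdiff_of_subset hT₀N, hNcard, hT₀card]
      omega
  have hforce : IsKForcingSet G k S := by
    refine ⟨m + 1, ?_⟩
    rw [Function.iterate_succ_apply]
    apply iterate_univ_mono G k _ hm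
    refine Finset.union_subset ?_ ?_
    · exact hstep.trans (kStep_mono G k Finset.subset_union_left)
    · intro z hz
      exact kStep_subset G k _ (Finset.mem_union_right _ hz)
  -- card bound in ℕ
  have hScard : S.card ≤ 1 + (Δ - k) + T'.card := by
    calc S.card ≤ (insert v T₀).card + T'.card := Finset.card_union_le _ _
      _ ≤ (1 + T₀.card) + T'.card := by
          have := Finset.card_insert_le v T₀; omega
      _ = 1 + (Δ - k) + T'.card := by rw [hT₀card]
  have hnB : Δ + 1 ≤ Fintype.card V := hB₀card ▸ Finset.card_le_univ B₀
  have hB₀compl : B₀ᶜ.card = Fintype.card V - (Δ + 1) := by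
    rw [Finset.card_compl, hB₀card]
  have hSineq : S.card * (Δ + k - 2) ≤ (Δ - 2) * Fintype.card V + 2 := by
    obtain ⟨a, ha⟩ : ∃ a, Δ = a + 2 := ⟨Δ - 2, by omega⟩
    have hD : Δ + k - 2 = a + k := by omega
    have haux : (1 + (Δ - k)) * (a + k) ≤ a * (a + 3) + 2 :=
      aux_arith1 a k (Δ - k) (by omega) hk
    calc S.card * (Δ + k - 2) ≤ (1 + (Δ - k) + T'.card) * (Δ + k - 2) :=
          Nat.mul_le_mul_right _ hScard
      _ = (1 + (Δ - k)) * (a + k) + T'.card * (Δ + k - 2) := by rw [hD, Nat.add_mul]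
      _ ≤ (a * (a + 3) + 2) + (Δ - 2) * B₀ᶜ.card := Nat.add_le_add haux hT'budget
      _ = a * (a + 3) + a * (Fintype.card V - (a + 3)) + 2 := by
          rw [hB₀compl, show Δ - 2 = a by omega, show Δ + 1 = a + 3 by omega]; omega
      _ = a * Fintype.card V + 2 := by
          rw [← Nat.mul_add, Nat.add_sub_cancel' (by omega : a + 3 ≤ Fintype.card V)]
      _ = (Δ - 2) * Fintype.card V + 2 := by rw [show Δ - 2 = a by omega]
  -- conclude
  have hkf : kForcingNumber G k ≤ S.card :=
    Nat.sInf_le ⟨S, rfl, hforce⟩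
  have hpos : (0 : ℝ) < (Δ : ℝ) + k - 2 := by
    have h2 : (2 : ℝ) ≤ (Δ : ℝ) := by exact_mod_cast hΔ
    have h1 : (1 : ℝ) ≤ (k : ℝ) := by exact_mod_cast hk
    linarith
  rw [le_div_iff₀ hpos]
  have hcast : ((S.card : ℝ)) * ((Δ : ℝ) + k - 2) ≤ ((Δ : ℝ) - 2) * Fintype.card V + 2 := by
    have h1 : ((S.card * (Δ + k - 2) : ℕ) : ℝ) ≤ (((Δ - 2) * Fintype.card V + 2 : ℕ) : ℝ) :=
      Nat.cast_le.mpr hSineq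
    push_cast [Nat.cast_sub (show 2 ≤ Δ + k by omega), Nat.cast_sub hΔ] at h1
    convert h1 using 2 <;> push_cast <;> ring
  calc (kForcingNumber G k : ℝ) * ((Δ : ℝ) + k - 2)
      ≤ (S.card : ℝ) * ((Δ : ℝ) + k - 2) := by
        apply mul_le_mul_of_nonneg_right _ (le_of_lt hpos)
        exact_mod_cast hkf
    _ ≤ ((Δ : ℝ) - 2) * Fintype.card V + 2 := hcast
end
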